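/- Proposition: the matrix B = D·Cᵀ·(C·D·Cᵀ)⁻¹·C·D − D has the eigenvalue 0 with multiplicity exactly n, and its remaining M − n eigenvalues (counted with multiplicity) are all negative real numbers; equivalently, 0 is a root of the characteristic polynomial of B of multiplicity n and all other roots are negative reals. -/

import Mathlib

open Matrix Polynomial

private lemma charpoly_conj_aux {k : Type*} [Fintype k] [DecidableEq k]
    (V N W : Matrix k k ℝ) (h : V * W = 1) :
    (V * N * W).charpoly = N.charpoly := by
  have hVW : V.map (C : ℝ →+* ℝ[X]) * W.map (C : ℝ →+* ℝ[X]) = 1 := by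
    rw [← Matrix.map_mul, h, Matrix.map_one _ (map_zero _) (map_one _)]
  have hsc : V.map (C : ℝ →+* ℝ[X]) * Matrix.scalar k (X : ℝ[X]) * W.map (C : ℝ →+* ℝ[X])
      = Matrix.scalar k (X : ℝ[X]) := by
    rw [← (Matrix.scalar_commute (X : ℝ[X]) (fun r' => Commute.all _ _)
      (V.map (C : ℝ →+* ℝ[X]))).eq, Matrix.mul_assoc, hVW, Matrix.mul_one]
  have hch : V.map (C : ℝ →+* ℝ[X]) * charmatrix N * W.map (C : ℝ →+* ℝ[X])
      = charmatrix (V * N * W) := by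
    rw [charmatrix, charmatrix, Matrix.mul_sub, Matrix.sub_mul, hsc]
    simp only [RingHom.mapMatrix_apply, Matrix.map_mul]
  have hdet : (V.map (C : ℝ →+* ℝ[X])).det * (W.map (C : ℝ →+* ℝ[X])).det = 1 := by
    rw [← Matrix.det_mul, hVW, Matrix.det_one]
  rw [Matrix.charpoly, Matrix.charpoly, ← hch, Matrix.det_mul, Matrix.det_mul]
  calc (V.map (C : ℝ →+* ℝ[X])).det * (charmatrix N).det * (W.map (C : ℝ →+* ℝ[X])).det
      = ((V.map (C : ℝ →+* ℝ[X])).det * (W.map (C : ℝ →+* ℝ[X])).det) * (charmatrix N).det := by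
        ring
    _ = (charmatrix N).det := by rw [hdet, one_mul]

/-- With `D = diagonal d` (entries positive) and `C·D·Cᵀ` invertible, the
matrix `B = D·Cᵀ·(C·D·Cᵀ)⁻¹·C·D − D` has the eigenvalue `0` with multiplicity exactly
`n`, and its remaining `M − n` eigenvalues (counted with multiplicity as roots of its
characteristic polynomial, viewed over `ℂ`) are all negative real numbers. -/
theorem B_spectrum
    (n M : ℕ) (C : Matrix (Fin n) (Fin M) ℝ) (d : Fin M → ℝ)
    (hd : ∀ m, 0 < d m)
    (hinv : IsUnit (C * Matrix.diagonal d * Cᵀ)) :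
    ((Matrix.diagonal d * Cᵀ * (C * Matrix.diagonal d * Cᵀ)⁻¹ * C * Matrix.diagonal d
        - Matrix.diagonal d).charpoly.map (algebraMap ℝ ℂ)).rootMultiplicity 0 = n
    ∧ ∀ z ∈ ((Matrix.diagonal d * Cᵀ * (C * Matrix.diagonal d * Cᵀ)⁻¹ * C * Matrix.diagonal d
        - Matrix.diagonal d).charpoly.map (algebraMap ℝ ℂ)).roots,
        z ≠ 0 → z.im = 0 ∧ z.re < 0 := by
  classical
  set D : Matrix (Fin M) (Fin M) ℝ := Matrix.diagonal d with hD
  set A : Matrix (Fin n) (Fin n) ℝ := C * D * Cᵀ with hA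
  set B : Matrix (Fin M) (Fin M) ℝ := D * Cᵀ * A⁻¹ * C * D - D with hBdef
  have hAdet : IsUnit A.det := (Matrix.isUnit_iff_isUnit_det A).mp hinv
  have hDT : Dᵀ = D := Matrix.diagonal_transpose d
  have hAT : Aᵀ = A := by
    rw [hA]
    simp only [Matrix.transpose_mul, Matrix.transpose_transpose, hDT, Matrix.mul_assoc]
  have hAiT : A⁻¹ᵀ = A⁻¹ := by rw [Matrix.transpose_nonsing_inv, hAT]
  have hAA : A * A⁻¹ = 1 := Matrix.mul_nonsing_inv A hAdet
  have hA'A : A⁻¹ * A = 1 := Matrix.nonsing_inv_mul A hAdet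
  set e : Fin M → ℝ := fun m => Real.sqrt (d m) with he
  set E : Matrix (Fin M) (Fin M) ℝ := Matrix.diagonal e with hE
  have hE2 : E * E = D := by
    have hee : (fun m => e m * e m) = d := funext fun m => Real.mul_self_sqrt (hd m).le
    rw [hE, Matrix.diagonal_mul_diagonal, hee, hD]
  have hET : Eᵀ = E := Matrix.diagonal_transpose e
  have hEdet : IsUnit E.det := by
    rw [hE, Matrix.det_diagonal]
    exact (Finset.prod_pos fun m _ => Real.sqrt_pos.mpr (hd m)).ne'.isUnit
  set P : Matrix (Fin M) (Fin M) ℝ := E * Cᵀ * A⁻¹ * (C * E) with hP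
  have hCEEC : C * E * (E * Cᵀ) = A := by
    rw [hA, ← hE2]
    simp only [Matrix.mul_assoc]
  have hPP : P * P = P := by
    calc P * P = E * Cᵀ * A⁻¹ * (C * E * (E * Cᵀ)) * A⁻¹ * (C * E) := by
          simp only [hP, Matrix.mul_assoc]
      _ = P := by
          rw [hCEEC, hP]
          simp only [Matrix.mul_assoc]
          rw [show A * (A⁻¹ * (C * E)) = C * E by
            rw [← Matrix.mul_assoc, hAA, Matrix.one_mul]]
  have hPT : Pᵀ = P := by
    rw [hP]
    simp only [Matrix.transpose_mul, Matrix.transpose_transpose, hET, hAiT, Matrix.mul_assoc]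
  have hBE : B = E * (P - 1) * E := by
    have h1 : E * (E * Cᵀ * A⁻¹ * (C * E)) * E = D * Cᵀ * A⁻¹ * C * D := by
      conv_rhs => rw [← hE2]
      simp only [Matrix.mul_assoc]
    rw [hBdef, hP, Matrix.mul_sub, Matrix.sub_mul, Matrix.mul_one, hE2, h1]
  have hBT : Bᵀ = B := by
    rw [hBE]
    simp only [Matrix.transpose_mul, Matrix.transpose_sub, Matrix.transpose_one, hET, hPT,
      Matrix.mul_assoc]
  have hB : B.IsHermitian := by
    rw [Matrix.IsHermitian, Matrix.conjTranspose_eq_transpose_of_trivial]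
    exact hBT
  -- eigenvalue negativity
  have hmu : ∀ i, hB.eigenvalues i ≠ 0 → hB.eigenvalues i < 0 := by
    intro i hne
    set v : Fin M → ℝ := ⇑(hB.eigenvectorBasis i) with hv
    have hvne : v ≠ 0 := fun h => hB.eigenvectorBasis.orthonormal.ne_zero i (by rw [hv] at h; simpa using h)
    have heig : B *ᵥ v = hB.eigenvalues i • v := hB.mulVec_eigenvectorBasis i
    set w : Fin M → ℝ := E *ᵥ v with hw
    set u : Fin M → ℝ := P *ᵥ w with hu
    have hBv : B *ᵥ v = E *ᵥ ((P - 1) *ᵥ w) := by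
      rw [hBE, ← Matrix.mulVec_mulVec, ← Matrix.mulVec_mulVec]
    have hvmul : ∀ y : Fin M → ℝ, y ᵥ* P = P *ᵥ y := by
      intro y
      conv_lhs => rw [← hPT]
      rw [Matrix.vecMul_transpose]
    have hPu : P *ᵥ u = u := by rw [hu, Matrix.mulVec_mulVec, hPP]
    have hwu : w ⬝ᵥ u = u ⬝ᵥ u := by
      calc w ⬝ᵥ u = u ⬝ᵥ w := dotProduct_comm w u
        _ = (P *ᵥ u) ⬝ᵥ w := by rw [hPu]
        _ = (u ᵥ* P) ⬝ᵥ w := by rw [hvmul]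
        _ = u ⬝ᵥ (P *ᵥ w) := (Matrix.dotProduct_mulVec u P w).symm
        _ = u ⬝ᵥ u := by rw [← hu]
    have hq : v ⬝ᵥ (B *ᵥ v) = w ⬝ᵥ ((P - 1) *ᵥ w) := by
      rw [hBv, Matrix.dotProduct_mulVec]
      congr 1
      rw [← hET, Matrix.vecMul_transpose]
    have hPw : (P - 1) *ᵥ w = u - w := by
      rw [Matrix.sub_mulVec, Matrix.one_mulVec, ← hu]
    have hx : w ⬝ᵥ ((P - 1) *ᵥ w) = -((u - w) ⬝ᵥ (u - w)) := by
      rw [hPw]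
      have h1 : u ⬝ᵥ w = w ⬝ᵥ u := dotProduct_comm u w
      simp only [dotProduct_sub, sub_dotProduct]
      rw [h1, hwu]
      ring
    have hev : hB.eigenvalues i * (v ⬝ᵥ v) = -((u - w) ⬝ᵥ (u - w)) := by
      rw [← hx, ← hq, heig, dotProduct_smul, smul_eq_mul]
    have hxne : u - w ≠ 0 := by
      intro h0
      have h1 : (P - 1) *ᵥ w = 0 := by rw [hPw, h0]
      have h2 : B *ᵥ v = 0 := by rw [hBv, h1, Matrix.mulVec_zero]
      rw [heig] at h2
      rcases smul_eq_zero.mp h2 with h | h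
      · exact hne h
      · exact hvne h
    have hpos1 : 0 < (u - w) ⬝ᵥ (u - w) := by
      rcases lt_or_eq_of_le (Finset.sum_nonneg fun j _ => mul_self_nonneg ((u - w) j)) with h | h
      · exact h
      · exact absurd (dotProduct_self_eq_zero.mp h.symm) hxne
    have hpos2 : 0 < v ⬝ᵥ v := by
      rcases lt_or_eq_of_le (Finset.sum_nonneg fun j _ => mul_self_nonneg (v j)) with h | h
      · exact h
      · exact absurd (dotProduct_self_eq_zero.mp h.symm) hvne
    nlinarith [hev, hpos1, hpos2]
  -- rank computation
  have hrank : B.rank + n = M := by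
    have h1 : B.rank = (P - 1).rank := by
      rw [hBE, Matrix.rank_mul_eq_left_of_isUnit_det E (E * (P - 1)) hEdet,
        Matrix.rank_mul_eq_right_of_isUnit_det E (P - 1) hEdet]
    have hrange : LinearMap.range (P - 1).mulVecLin = LinearMap.ker P.mulVecLin := by
      ext x
      simp only [LinearMap.mem_range, LinearMap.mem_ker, Matrix.mulVecLin_apply]
      constructor
      · rintro ⟨y, rfl⟩
        rw [Matrix.mulVec_mulVec]
        have hz : P * (P - 1) = 0 := by
          rw [Matrix.mul_sub, hPP, Matrix.mul_one, sub_self]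
        rw [hz, Matrix.zero_mulVec]
      · intro hx
        refine ⟨-x, ?_⟩
        rw [Matrix.mulVec_neg, Matrix.sub_mulVec, Matrix.one_mulVec, hx]
        simp
    have h2 : (P - 1).rank = Module.finrank ℝ (LinearMap.ker P.mulVecLin) := by
      show Module.finrank ℝ (LinearMap.range (P - 1).mulVecLin) = _
      rw [hrange]
    have h3 : P.rank + Module.finrank ℝ (LinearMap.ker P.mulVecLin) = M := by
      have hrn := LinearMap.finrank_range_add_finrank_ker P.mulVecLin
      rw [Module.finrank_fintype_fun_eq_card, Fintype.card_fin] at hrn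
      exact hrn
    have hP1 : P * (E * Cᵀ * A⁻¹) = E * Cᵀ * A⁻¹ := by
      calc P * (E * Cᵀ * A⁻¹) = E * Cᵀ * A⁻¹ * (C * E * (E * Cᵀ)) * A⁻¹ := by
            simp only [hP, Matrix.mul_assoc]
        _ = E * Cᵀ * A⁻¹ := by
            rw [hCEEC]
            simp only [Matrix.mul_assoc]
            rw [hAA, Matrix.mul_one]
    have hfac : A⁻¹ * (C * E) * (P * (E * Cᵀ * A⁻¹)) = A⁻¹ := by
      rw [hP1]
      calc A⁻¹ * (C * E) * (E * Cᵀ * A⁻¹) = A⁻¹ * (C * E * (E * Cᵀ)) * A⁻¹ := by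
            simp only [Matrix.mul_assoc]
        _ = A⁻¹ := by rw [hCEEC, hA'A, Matrix.one_mul]
    have hAidet : IsUnit (A⁻¹).det := by
      exact Matrix.isUnit_nonsing_inv_det A hAdet
    have h4 : P.rank = n := by
      apply le_antisymm
      · calc P.rank ≤ (C * E).rank := Matrix.rank_mul_le_right _ _
          _ ≤ Fintype.card (Fin n) := Matrix.rank_le_card_height _
          _ = n := Fintype.card_fin n
      · calc n = Fintype.card (Fin n) := (Fintype.card_fin n).symm
          _ = (A⁻¹).rank := (Matrix.rank_of_isUnit _ ((Matrix.isUnit_iff_isUnit_det _).mpr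
                hAidet)).symm
          _ = (A⁻¹ * (C * E) * (P * (E * Cᵀ * A⁻¹))).rank := by rw [hfac]
          _ ≤ (P * (E * Cᵀ * A⁻¹)).rank := Matrix.rank_mul_le_right _ _
          _ ≤ P.rank := Matrix.rank_mul_le_left _ _
    omega
  -- characteristic polynomial via spectral theorem
  set U : Matrix (Fin M) (Fin M) ℝ := (hB.eigenvectorUnitary : Matrix (Fin M) (Fin M) ℝ)
    with hU
  have hUU : star U * U = 1 := by
    rw [hU]
    exact Unitary.coe_star_mul_self hB.eigenvectorUnitary
  have hdiag : star U * B * U = Matrix.diagonal hB.eigenvalues := by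
    have hst := hB.conjStarAlgAut_star_eigenvectorUnitary
    simp only [Unitary.conjStarAlgAut_apply, Unitary.coe_star, star_star] at hst
    rw [hU, hst]
    ext i j
    simp [Matrix.diagonal_apply]
  have hcp : B.charpoly = (Matrix.diagonal hB.eigenvalues).charpoly := by
    have hUU' : U * star U = 1 := by
      rw [hU]
      exact Unitary.coe_mul_star_self hB.eigenvectorUnitary
    calc B.charpoly = (U * (star U * B * U) * star U).charpoly := by
          rw [show U * (star U * B * U) * star U = B by
            calc U * (star U * B * U) * star U = (U * star U) * B * (U * star U) := by
                  simp only [Matrix.mul_assoc]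
              _ = B := by rw [hUU', Matrix.mul_one, Matrix.one_mul]]
      _ = (star U * B * U).charpoly := charpoly_conj_aux U (star U * B * U) (star U) hUU'
      _ = (Matrix.diagonal hB.eigenvalues).charpoly := by rw [hdiag]
  have hcd : B.charpoly
      = ((Finset.univ.val.map hB.eigenvalues).map fun a => (X : ℝ[X]) - Polynomial.C a).prod := by
    rw [hcp]
    have hcm : charmatrix (Matrix.diagonal hB.eigenvalues)
        = Matrix.diagonal fun i => (X : ℝ[X]) - Polynomial.C (hB.eigenvalues i) := by
      ext i j
      by_cases h : i = j
      · subst h; simp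
      · rw [Matrix.charmatrix_apply_ne _ _ _ h, Matrix.diagonal_apply_ne _ h,
          Matrix.diagonal_apply_ne _ h]
        simp
    rw [Matrix.charpoly, hcm, Matrix.det_diagonal, Multiset.map_map]
    rfl
  -- the mapped polynomial
  have hmap : B.charpoly.map (algebraMap ℝ ℂ)
      = ((Finset.univ.val.map fun i => ((hB.eigenvalues i : ℝ) : ℂ)).map
          fun a => (X : ℂ[X]) - Polynomial.C a).prod := by
    rw [hcd, Polynomial.map_multiset_prod, Multiset.map_map, Multiset.map_map, Multiset.map_map]
    congr 1
    apply Multiset.map_congr rfl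
    intro i _
    simp [Polynomial.map_sub]
  have hroots : (B.charpoly.map (algebraMap ℝ ℂ)).roots
      = Finset.univ.val.map fun i => ((hB.eigenvalues i : ℝ) : ℂ) := by
    rw [hmap, Polynomial.roots_multiset_prod_X_sub_C]
  constructor
  · -- multiplicity of 0
    rw [← Polynomial.count_roots, hroots, Multiset.count_map]
    have hcard1 : (Multiset.filter (fun i => (0 : ℂ) = ((hB.eigenvalues i : ℝ) : ℂ))
        Finset.univ.val).card
        = (Finset.univ.filter fun i => hB.eigenvalues i = 0).card := by
      rw [show (Finset.univ.filter fun i => hB.eigenvalues i = 0).card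
          = (Multiset.filter (fun i => hB.eigenvalues i = 0) Finset.univ.val).card from rfl]
      congr 1
      apply Multiset.filter_congr
      intro i _
      constructor
      · intro h
        exact_mod_cast h.symm
      · intro h
        exact_mod_cast h.symm
    rw [hcard1]
    have hsplit : (Finset.univ.filter fun i => hB.eigenvalues i = 0).card
        + (Finset.univ.filter fun i => ¬ hB.eigenvalues i = 0).card = M := by
      rw [Finset.card_filter_add_card_filter_not]
      simp
    have hnz : (Finset.univ.filter fun i => ¬ hB.eigenvalues i = 0).card = B.rank := by
      rw [hB.rank_eq_card_non_zero_eigs, Fintype.card_subtype]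
    omega
  · -- negativity of nonzero roots
    intro z hz hzne
    rw [hroots, Multiset.mem_map] at hz
    obtain ⟨i, -, rfl⟩ := hz
    have hne : hB.eigenvalues i ≠ 0 := by
      intro h
      apply hzne
      rw [h]
      simp
    refine ⟨Complex.ofReal_im _, ?_⟩
    rw [Complex.ofReal_re]
    exact hmu i hne
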